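/- Let q be a power of a prime p and let F be an algebraically closed field of characteristic p containing 𝔽_q, equipped with a nonarchimedean absolute value |·|. Let c ∈ F with |c| < 1. Then there exists a sequence v : ℕ → F with v₀ = 1, satisfying v_n − v_n^q = c·v_{n−1}^q for all n ≥ 1, and with |v_n| = |c|^{(qⁿ−1)/(q−1)} for all n ≥ 0; in particular |v_n| → 0 as n → ∞. -/

import Mathlib

open Polynomial IsUltrametricDist

/-- In `F`, the product over all `t` in the Galois field of `(x - φ t)` equals `x^q - x`. -/
lemma aux_prod (p n q : ℕ) [Fact p.Prime] [Fintype (GaloisField p n)] (hn : n ≠ 0)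
    (hq : q = p ^ n)
    (F : Type) [Field F] (φ : GaloisField p n →+* F) (x : F) :
    ∏ t : GaloisField p n, (x - φ t) = x ^ q - x := by
  classical
  subst hq
  set q := p ^ n with hq
  have hp1 : 1 < p := (Fact.out : p.Prime).one_lt
  have hq2 : 1 < q := Nat.one_lt_pow hn hp1
  have hcard : Fintype.card (GaloisField p n) = q := by
    rw [← Nat.card_eq_fintype_card, GaloisField.card p n hn]
  have hmonic : ((X : (GaloisField p n)[X]) ^ q - X).Monic := by
    apply monic_X_pow_sub
    rw [degree_X]
    exact_mod_cast hq2
  have hroots : ((X : (GaloisField p n)[X]) ^ q - X).roots = Finset.univ.val := by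
    have := FiniteField.roots_X_pow_card_sub_X (GaloisField p n)
    rwa [hcard] at this
  have hdeg : ((X : (GaloisField p n)[X]) ^ q - X).natDegree = q :=
    FiniteField.X_pow_card_pow_sub_X_natDegree_eq (GaloisField p n) hn hp1
  have h2 : (Multiset.map (fun a => (X : (GaloisField p n)[X]) - C a) Finset.univ.val).prod
      = (X : (GaloisField p n)[X]) ^ q - X := by
    rw [← hroots]
    exact prod_multiset_X_sub_C_of_monic_of_roots_card_eq hmonic
      (by rw [hroots, hdeg, ← Finset.card_def, Finset.card_univ, hcard])
  set ψ : (GaloisField p n)[X] →+* F :=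
    (Polynomial.evalRingHom x).comp (Polynomial.mapRingHom φ) with hψ
  have hψ' : ∀ g : (GaloisField p n)[X], ψ g = Polynomial.eval x (Polynomial.map φ g) :=
    fun g => rfl
  calc ∏ t : GaloisField p n, (x - φ t)
      = (Multiset.map (fun a => ψ ((X : (GaloisField p n)[X]) - C a)) Finset.univ.val).prod := by
        rw [Finset.prod_eq_multiset_prod]
        congr 1
        apply Multiset.map_congr rfl
        intro t _
        simp [hψ']
    _ = ψ ((Multiset.map (fun a => (X : (GaloisField p n)[X]) - C a) Finset.univ.val).prod) := by
        rw [map_multiset_prod, Multiset.map_map]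
        rfl
    _ = ψ ((X : (GaloisField p n)[X]) ^ q - X) := by rw [h2]
    _ = x ^ q - x := by simp [hψ']

/-- Existence of a small root of `x - x^q = b` with `‖x‖ = ‖b‖` when `‖b‖ < 1`. -/
lemma aux_root (p n q : ℕ) [Fact p.Prime] (hn : n ≠ 0) (hq : q = p ^ n)
    (F : Type) [NormedField F] [IsUltrametricDist F] [IsAlgClosed F] [CharP F p]
    (φ : GaloisField p n →+* F) (b : F) (hb : ‖b‖ < 1) :
    ∃ x : F, x - x ^ q = b ∧ ‖x‖ = ‖b‖ := by
  classical
  have hp1 : 1 < p := (Fact.out : p.Prime).one_lt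
  have hq2 : 1 < q := hq ▸ Nat.one_lt_pow hn hp1
  have hq0 : q ≠ 0 := by omega
  rcases eq_or_ne b 0 with rfl | hb0
  · exact ⟨0, by simp [zero_pow hq0], by simp⟩
  haveI : Fintype (GaloisField p n) := Fintype.ofFinite _
  have hcard : Fintype.card (GaloisField p n) = q := by
    rw [← Nat.card_eq_fintype_card, GaloisField.card p n hn, hq]
  -- every solution of `y^q - y = -b` has norm at most 1
  have hnormle : ∀ y : F, y ^ q - y = -b → ‖y‖ ≤ 1 := by
    intro y hy
    by_contra hgt
    push_neg at hgt
    have h1 : ‖y‖ < ‖y ^ q‖ := by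
      rw [norm_pow]
      calc ‖y‖ = ‖y‖ ^ 1 := (pow_one _).symm
        _ < ‖y‖ ^ q := pow_lt_pow_right₀ hgt hq2
    have h2 : ‖y ^ q - y‖ = ‖y ^ q‖ := by
      rw [sub_eq_add_neg, norm_add_eq_max_of_norm_ne_norm (by rw [norm_neg]; exact h1.ne'),
        norm_neg, max_eq_left h1.le]
    rw [hy, norm_neg] at h2
    have : (1 : ℝ) < ‖y ^ q‖ := lt_trans hgt h1
    rw [← h2] at this
    linarith
  -- all the roots, shifted by elements of the Galois field
  have hshift : ∀ (y : F) (t : GaloisField p n), y ^ q - y = -b →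
      (y - φ t) ^ q - (y - φ t) = -b := by
    intro y t hy
    have hfrob : (y - φ t) ^ q = y ^ q - (φ t) ^ q := by
      rw [hq]; exact sub_pow_char_pow (R := F) (p := p) (n := n) y (φ t)
    have htq : (φ t) ^ q = φ t := by
      rw [← map_pow]
      congr 1
      have := FiniteField.pow_card t
      rwa [hcard] at this
    rw [hfrob, htq]
    ring_nf
    ring_nf at hy
    linear_combination hy
  -- get some root of X^q - X + C b
  have hdeg : ((X : F[X]) ^ q - X + C b).degree ≠ 0 := by
    have h1 : ((-X + C b : F[X])).degree < ((X : F[X]) ^ q).degree := by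
      apply lt_of_le_of_lt (degree_add_le _ _)
      rw [degree_neg, degree_X, degree_X_pow]
      apply max_lt
      · exact_mod_cast hq2
      · exact lt_of_le_of_lt degree_C_le (by exact_mod_cast Nat.pos_of_ne_zero hq0)
    have h0 : ((X : F[X]) ^ q - X + C b) = (X : F[X]) ^ q + (-X + C b) := by ring
    rw [h0, degree_add_eq_left_of_degree_lt h1, degree_X_pow]
    exact_mod_cast hq0
  obtain ⟨x₀, hx₀⟩ := IsAlgClosed.exists_root _ hdeg
  have hx₀' : x₀ ^ q - x₀ = -b := by
    rw [IsRoot.def, eval_add, eval_sub, eval_pow, eval_X, eval_C] at hx₀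
    linear_combination hx₀
  -- norm of product over all roots equals ‖b‖
  have hprodnorm : ∀ y : F, y ^ q - y = -b →
      ∏ t : GaloisField p n, ‖y - φ t‖ = ‖b‖ := by
    intro y hy
    rw [← norm_prod, aux_prod p n q hn hq F φ y, hy, norm_neg]
  -- there is a root of norm < 1
  have hex : ∃ t : GaloisField p n, ‖x₀ - φ t‖ < 1 := by
    by_contra hall
    push_neg at hall
    have : (1 : ℝ) ≤ ∏ t : GaloisField p n, ‖x₀ - φ t‖ := by
      calc (1 : ℝ) = ∏ _t : GaloisField p n, (1 : ℝ) := by rw [Finset.prod_const_one]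
        _ ≤ ∏ t : GaloisField p n, ‖x₀ - φ t‖ :=
          Finset.prod_le_prod (fun t _ => zero_le_one) (fun t _ => hall t)
    rw [hprodnorm x₀ hx₀'] at this
    linarith
  obtain ⟨t₀, ht₀⟩ := hex
  set y := x₀ - φ t₀ with hy
  have hyroot : y ^ q - y = -b := hshift x₀ t₀ hx₀'
  -- elements of the Galois field have norm 1
  have hφnorm : ∀ t : GaloisField p n, t ≠ 0 → ‖φ t‖ = 1 := by
    intro t ht
    have h1 : t ^ (q - 1) = 1 := by
      have := FiniteField.pow_card_sub_one_eq_one t ht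
      rwa [hcard] at this
    have h2 : ‖φ t‖ ^ (q - 1) = 1 := by
      rw [← norm_pow, ← map_pow, h1, map_one, norm_one]
    have hq1 : q - 1 ≠ 0 := by omega
    have hnn : (0 : ℝ) ≤ ‖φ t‖ := norm_nonneg _
    rcases lt_trichotomy (‖φ t‖) 1 with h | h | h
    · exfalso
      have := pow_lt_one₀ hnn h hq1
      rw [h2] at this; linarith
    · exact h
    · exfalso
      have := one_lt_pow₀ h hq1
      rw [h2] at this; linarith
  -- compute the norm of y
  have hynorm : ‖y‖ = ‖b‖ := by
    have hprod := hprodnorm y hyroot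
    rw [Finset.prod_eq_single (0 : GaloisField p n)] at hprod
    · rwa [map_zero, sub_zero] at hprod
    · intro t _ ht
      have hmax : ‖y - φ t‖ = max ‖y‖ ‖φ t‖ := by
        rw [sub_eq_add_neg,
          norm_add_eq_max_of_norm_ne_norm (by rw [norm_neg, hφnorm t ht]; exact ht₀.ne),
          norm_neg]
      rw [hmax, hφnorm t ht]
      exact max_eq_right ht₀.le
    · intro h
      exact absurd (Finset.mem_univ _) h
  exact ⟨y, by linear_combination -hyroot, hynorm⟩

theorem statement13
    (p n q : ℕ) [Fact p.Prime] (hn : n ≠ 0) (hq : q = p ^ n)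
    (F : Type) [NormedField F] [IsUltrametricDist F] [IsAlgClosed F] [CharP F p]
    (φ : GaloisField p n →+* F)
    (c : F) (hc : ‖c‖ < 1) :
    ∃ v : ℕ → F, v 0 = 1 ∧
      (∀ k : ℕ, v (k + 1) - (v (k + 1)) ^ q = c * (v k) ^ q) ∧
      (∀ k : ℕ, ‖v k‖ = ‖c‖ ^ ((((q : ℝ) ^ k) - 1) / ((q : ℝ) - 1))) ∧
      Filter.Tendsto (fun k => ‖v k‖) Filter.atTop (nhds 0) := by
  classical
  have hp1 : 1 < p := (Fact.out : p.Prime).one_lt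
  have hq2 : 1 < q := hq ▸ Nat.one_lt_pow hn hp1
  have hqR : (1 : ℝ) < (q : ℝ) := by exact_mod_cast hq2
  have hqR1 : (q : ℝ) - 1 ≠ 0 := by linarith
  set s : ℕ → ℝ := fun k => (((q : ℝ) ^ k) - 1) / ((q : ℝ) - 1) with hs
  have hs0 : s 0 = 0 := by simp [hs]
  have hsnn : ∀ k, 0 ≤ s k := by
    intro k
    apply div_nonneg _ (by linarith)
    have : (1 : ℝ) ≤ (q : ℝ) ^ k := one_le_pow₀ hqR.le
    linarith
  have hsrec : ∀ k, s (k + 1) = 1 + s k * q := by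
    intro k
    simp only [hs]
    field_simp
    ring
  choose! r hr1 hr2 using aux_root p n q hn hq F φ
  set v : ℕ → F := fun k => Nat.rec (1 : F) (fun _ vk => r (c * vk ^ q)) k with hv
  have hv0 : v 0 = 1 := rfl
  have hvs : ∀ k, v (k + 1) = r (c * (v k) ^ q) := fun k => rfl
  -- norm computation
  have key : ∀ k, ‖v k‖ = ‖c‖ ^ (s k) := by
    intro k
    induction k with
    | zero => rw [hv0, norm_one, hs0, Real.rpow_zero]
    | succ k ih =>
      have h1 : ‖v k‖ ≤ 1 := by
        rw [ih]
        exact Real.rpow_le_one (norm_nonneg c) hc.le (hsnn k)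
      have hlt : ‖c * (v k) ^ q‖ < 1 := by
        rw [norm_mul, norm_pow]
        calc ‖c‖ * ‖v k‖ ^ q ≤ ‖c‖ * 1 := by
              apply mul_le_mul_of_nonneg_left _ (norm_nonneg c)
              exact pow_le_one₀ (norm_nonneg _) h1
          _ < 1 := by rwa [mul_one]
      rw [hvs, hr2 _ hlt, norm_mul, norm_pow, ih]
      rw [← Real.rpow_natCast (‖c‖ ^ (s k)) q, ← Real.rpow_mul (norm_nonneg c)]
      rw [hsrec k]
      rw [Real.rpow_add' (norm_nonneg c)
        (by
          have h2 := mul_nonneg (hsnn k) (by positivity : (0 : ℝ) ≤ (q : ℝ))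
          intro hcon; linarith [hcon]), Real.rpow_one]
  -- the recursion
  have hrec : ∀ k, v (k + 1) - (v (k + 1)) ^ q = c * (v k) ^ q := by
    intro k
    have h1 : ‖v k‖ ≤ 1 := by
      rw [key k]
      exact Real.rpow_le_one (norm_nonneg c) hc.le (hsnn k)
    have hlt : ‖c * (v k) ^ q‖ < 1 := by
      rw [norm_mul, norm_pow]
      calc ‖c‖ * ‖v k‖ ^ q ≤ ‖c‖ * 1 := by
            apply mul_le_mul_of_nonneg_left _ (norm_nonneg c)
            exact pow_le_one₀ (norm_nonneg _) h1
        _ < 1 := by rwa [mul_one]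
    rw [hvs]
    exact hr1 _ hlt
  -- the limit
  have hbound : ∀ k, ‖v k‖ ≤ ‖c‖ ^ k := by
    intro k
    rw [key k]
    rcases eq_or_lt_of_le (norm_nonneg c) with h0 | h0
    · rcases Nat.eq_zero_or_pos k with rfl | hk
      · simp [hs0]
      · rw [← h0, Real.zero_rpow, zero_pow (by omega)]
        have : (1 : ℝ) < (q : ℝ) ^ k := one_lt_pow₀ hqR (by omega)
        have : 0 < s k := div_pos (by linarith) (by linarith)
        exact this.ne'
    · rw [← Real.rpow_natCast ‖c‖ k]
      apply Real.rpow_le_rpow_of_exponent_ge h0 hc.le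
      -- show (k : ℝ) ≤ s k
      rw [hs, le_div_iff₀ (by linarith : (0 : ℝ) < (q : ℝ) - 1)]
      have hbern : 1 + (k : ℝ) * ((q : ℝ) - 1) ≤ (1 + ((q : ℝ) - 1)) ^ k :=
        one_add_mul_le_pow (by linarith) k
      have : (1 : ℝ) + ((q : ℝ) - 1) = (q : ℝ) := by ring
      rw [this] at hbern
      linarith
  have htend : Filter.Tendsto (fun k => ‖v k‖) Filter.atTop (nhds 0) := by
    apply squeeze_zero (fun k => norm_nonneg _) hbound
    exact tendsto_pow_atTop_nhds_zero_of_lt_one (norm_nonneg c) hc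
  exact ⟨v, hv0, hrec, key, htend⟩
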